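/- Energy growth estimate: if u solves the relative guidance-by-repulsion equation on an interval I with continuous controls κᵖ, κᶜ and u(t) ≠ 0 for all t ∈ I, then for all t ∈ I the standard energy satisfies E'(t) ≤ (1/(2ν)) ((1 − κᵖ(t))² f_d(|u(t)|)² + κᶜ(t)²) |u(t)|². -/

import Mathlib

open Real Filter MeasureTheory intervalIntegral
open scoped RealInnerProductSpace Topology

noncomputable section

/-- Perpendicular rotation in the plane: `(a, b)^⊥ = (-b, a)`. -/
def perp (w : EuclideanSpace ℝ (Fin 2)) : EuclideanSpace ℝ (Fin 2) :=
  (WithLp.equiv 2 (Fin 2 → ℝ)).symm ![-(w 1), w 0]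

/-- The relative guidance-by-repulsion equation
`u'' + (κᵖ(t) f_d(|u|) − f_e(|u|)) u + ν u' = κᶜ(t) u^⊥` holds at time `t`. -/
def SolvesRel (fd fe : ℝ → ℝ) (ν : ℝ) (κp κc : ℝ → ℝ)
    (u : ℝ → EuclideanSpace ℝ (Fin 2)) (t : ℝ) : Prop :=
  deriv (deriv u) t + (κp t * fd ‖u t‖ - fe ‖u t‖) • u t + ν • deriv u t
    = κc t • perp (u t)

/-- The potential `P(w) = ∫_{r_p}^{‖w‖} r (f_d(r) − f_e(r)) dr`. -/
def pot (fd fe : ℝ → ℝ) (rp : ℝ) (w : EuclideanSpace ℝ (Fin 2)) : ℝ :=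
  ∫ r in rp..‖w‖, r * (fd r - fe r)

lemma inner_perp_self (w : EuclideanSpace ℝ (Fin 2)) : ⟪w, perp w⟫ = 0 := by
  simp [perp, PiLp.inner_apply, Fin.sum_univ_two]
  ring

lemma inner_perp_perp (w : EuclideanSpace ℝ (Fin 2)) : ⟪perp w, perp w⟫ = ⟪w, w⟫ := by
  simp only [perp, PiLp.inner_apply, Fin.sum_univ_two]
  simp
  ring

/-- Energy growth estimate: along a solution of the relative equation with
continuous controls, `E'(t) ≤ (1/(2ν)) ((1 − κᵖ(t))² f_d(|u|)² + κᶜ(t)²) |u|²`. -/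
theorem energy_growth_estimate
    (fd fe : ℝ → ℝ) (rp γm : ℝ) (hrp : 0 < rp) (hγm : 0 < γm)
    (hfd_lip : LocallyLipschitzOn (Set.Ioi (0:ℝ)) fd)
    (hfe_lip : LocallyLipschitzOn (Set.Ioi (0:ℝ)) fe)
    (hf_neg : ∀ r : ℝ, 0 < r → r < rp → fd r - fe r < 0)
    (hf_nonneg : ∀ r : ℝ, rp ≤ r → 0 ≤ fd r - fe r)
    (hf_deriv : 0 < deriv (fun r => fd r - fe r) rp)
    (hfd_nonneg : ∀ r : ℝ, 0 < r → 0 ≤ fd r)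
    (hfd_bdd : ∃ C : ℝ, ∀ r : ℝ, 0 < r → fd r ≤ C)
    (hfd_lim : Filter.Tendsto fd Filter.atTop (nhds γm))
    (hfe_nonneg : ∀ r : ℝ, 0 < r → 0 ≤ fe r)
    (hfe_div : ¬ MeasureTheory.IntegrableOn (fun r => r * fe r) (Set.Ioc 0 rp))
    (hfe_lim : Filter.Tendsto fe Filter.atTop (nhds 0))
    (ν : ℝ) (hν : 0 < ν) (κp κc : ℝ → ℝ)
    (hκp_cont : Continuous κp) (hκc_cont : Continuous κc)
    (I : Set ℝ) (u : ℝ → EuclideanSpace ℝ (Fin 2)) (hu : ContDiff ℝ 2 u)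
    (hsol : ∀ t ∈ I, SolvesRel fd fe ν κp κc u t)
    (hne : ∀ t ∈ I, u t ≠ 0) :
    ∀ t ∈ I, deriv (fun s => ‖deriv u s‖ ^ 2 / 2 + pot fd fe rp (u s)) t
      ≤ 1 / (2 * ν) * ((1 - κp t) ^ 2 * (fd ‖u t‖) ^ 2 + (κc t) ^ 2) * ‖u t‖ ^ 2 := by
  intro t ht
  -- differentiability of u and deriv u
  have hu' : Differentiable ℝ u ∧ ContDiff ℝ 1 (deriv u) := by
    rw [show (2 : WithTop ℕ∞) = 1 + 1 from rfl, contDiff_succ_iff_deriv] at hu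
    exact ⟨hu.1, hu.2.2⟩
  have hu1 : HasDerivAt u (deriv u t) t := (hu'.1 t).hasDerivAt
  have hu2 : HasDerivAt (deriv u) (deriv (deriv u) t) t :=
    ((hu'.2.differentiable one_ne_zero) t).hasDerivAt
  set x₀ : ℝ := ‖u t‖ with hx₀def
  have hx₀ : 0 < x₀ := norm_pos_iff.mpr (hne t ht)
  -- continuity of the integrand on (0, ∞)
  have hf_cont : ContinuousOn (fun r : ℝ => r * (fd r - fe r)) (Set.Ioi 0) :=
    continuousOn_id.mul ((hfd_lip.continuousOn.sub hfe_lip.continuousOn))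
  -- FTC: derivative of the potential's outer function
  have hsub : Set.uIcc rp x₀ ⊆ Set.Ioi (0:ℝ) := by
    intro r hr
    have := hr.1
    simp only [Set.mem_Ioi]
    exact lt_of_lt_of_le (lt_min hrp hx₀) this
  have hg : HasDerivAt (fun x => ∫ r in rp..x, r * (fd r - fe r))
      (x₀ * (fd x₀ - fe x₀)) x₀ := by
    refine intervalIntegral.integral_hasDerivAt_right
      (hf_cont.mono hsub |>.intervalIntegrable)
      (hf_cont.stronglyMeasurableAtFilter isOpen_Ioi _ hx₀)
      ((hf_cont.continuousAt (isOpen_Ioi.mem_nhds hx₀)))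
  -- derivative of s ↦ ‖u s‖
  have hinner : HasDerivAt (fun s => ⟪u s, u s⟫)
      (⟪u t, deriv u t⟫ + ⟪deriv u t, u t⟫) t := hu1.inner ℝ hu1
  have hinner' : HasDerivAt (fun s => ⟪u s, u s⟫) (2 * ⟪u t, deriv u t⟫) t := by
    convert hinner using 1; rw [real_inner_comm (deriv u t) (u t)]; ring
  have hne0 : ⟪u t, u t⟫ ≠ 0 := by
    rw [real_inner_self_eq_norm_sq]; positivity
  have hsqrt : HasDerivAt (fun s => Real.sqrt ⟪u s, u s⟫)
      (1 / (2 * Real.sqrt ⟪u t, u t⟫) * (2 * ⟪u t, deriv u t⟫)) t :=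
    (Real.hasDerivAt_sqrt hne0).comp t hinner'
  have hnorm_eq : (fun s => Real.sqrt ⟪u s, u s⟫) = fun s => ‖u s‖ := by
    funext s
    rw [real_inner_self_eq_norm_mul_norm, Real.sqrt_mul_self (norm_nonneg _)]
  have hsqrt_val : Real.sqrt ⟪u t, u t⟫ = x₀ := by
    rw [real_inner_self_eq_norm_mul_norm, Real.sqrt_mul_self (norm_nonneg _)]
  have hnorm : HasDerivAt (fun s => ‖u s‖) (⟪u t, deriv u t⟫ / x₀) t := by
    rw [← hnorm_eq]
    convert hsqrt using 1
    rw [hsqrt_val]; field_simp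
  -- derivative of the potential term
  have hpot : HasDerivAt (fun s => pot fd fe rp (u s))
      ((fd x₀ - fe x₀) * ⟪u t, deriv u t⟫) t := by
    have := hg.comp t hnorm
    rw [show ((fd x₀ - fe x₀) * ⟪u t, deriv u t⟫) = x₀ * (fd x₀ - fe x₀) * (⟪u t, deriv u t⟫ / x₀) by
      rw [mul_comm x₀, mul_assoc]; congr 1; field_simp]
    exact this
  -- derivative of the kinetic term
  have hkin : HasDerivAt (fun s => ‖deriv u s‖ ^ 2 / 2)
      (⟪deriv (deriv u) t, deriv u t⟫) t := by
    have h := (hu2.inner ℝ hu2).div_const 2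
    have heq : (fun s => ⟪deriv u s, deriv u s⟫ / 2) = fun s => ‖deriv u s‖ ^ 2 / 2 := by
      funext s; rw [real_inner_self_eq_norm_sq]
    rw [heq] at h
    refine h.congr_deriv ?_
    rw [real_inner_comm (deriv (deriv u) t) (deriv u t)]; ring
  have hE := (hkin.add hpot).deriv
  rw [show (fun s => ‖deriv u s‖ ^ 2 / 2 + pot fd fe rp (u s)) = ((fun s => ‖deriv u s‖ ^ 2 / 2) + fun s => pot fd fe rp (u s)) from rfl, hE]
  -- use the equation
  have heq := hsol t ht
  unfold SolvesRel at heq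
  have hdd : deriv (deriv u) t = κc t • perp (u t)
      - (κp t * fd x₀ - fe x₀) • u t - ν • deriv u t := by
    rw [← heq]; abel
  set p : ℝ := ⟪u t, deriv u t⟫
  set q : ℝ := ⟪perp (u t), deriv u t⟫
  have hddi : ⟪deriv (deriv u) t, deriv u t⟫
      = κc t * q - (κp t * fd x₀ - fe x₀) * p - ν * ‖deriv u t‖ ^ 2 := by
    rw [hdd]
    rw [inner_sub_left, inner_sub_left, real_inner_smul_left, real_inner_smul_left,
      real_inner_smul_left, real_inner_self_eq_norm_sq]
  rw [hddi]
  -- Cauchy–Schwarz on the combined vector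
  set a : ℝ := (1 - κp t) * fd x₀
  set v : EuclideanSpace ℝ (Fin 2) := a • u t + κc t • perp (u t)
  have hv_inner : ⟪v, deriv u t⟫ = a * p + κc t * q := by
    rw [inner_add_left, real_inner_smul_left, real_inner_smul_left]
  have hperp0 : ⟪u t, perp (u t)⟫ = 0 := inner_perp_self _
  have hperp0' : ⟪perp (u t), u t⟫ = 0 := by
    rw [real_inner_comm]; exact hperp0
  have hpp : ⟪perp (u t), perp (u t)⟫ = x₀ ^ 2 := by
    rw [inner_perp_perp, real_inner_self_eq_norm_sq]
  have huu : ⟪u t, u t⟫ = x₀ ^ 2 := real_inner_self_eq_norm_sq _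
  have hv_norm : ‖v‖ ^ 2 = (a ^ 2 + κc t ^ 2) * x₀ ^ 2 := by
    rw [← real_inner_self_eq_norm_sq]
    simp only [v, inner_add_left, inner_add_right, real_inner_smul_left,
      real_inner_smul_right, hperp0, hperp0', hpp, huu]
    ring
  have hCS : ⟪v, deriv u t⟫ ≤ ‖v‖ * ‖deriv u t‖ := real_inner_le_norm v (deriv u t)
  rw [hv_inner] at hCS
  have key : a * p + κc t * q - ν * ‖deriv u t‖ ^ 2
      ≤ 1 / (2 * ν) * ((1 - κp t) ^ 2 * (fd x₀) ^ 2 + (κc t) ^ 2) * x₀ ^ 2 := by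
    have h1 : (0:ℝ) ≤ (‖v‖ - ν * ‖deriv u t‖) ^ 2 := sq_nonneg _
    have h2 : (0:ℝ) ≤ ν * ‖deriv u t‖ ^ 2 := by positivity
    have h3 : 1 / (2 * ν) * ((1 - κp t) ^ 2 * (fd x₀) ^ 2 + (κc t) ^ 2) * x₀ ^ 2
        = ‖v‖ ^ 2 / (2 * ν) := by
      rw [hv_norm]; field_simp [a]; ring
    have hν2 : (0:ℝ) < 2 * ν := by linarith
    rw [h3]
    calc a * p + κc t * q - ν * ‖deriv u t‖ ^ 2
        ≤ ‖v‖ * ‖deriv u t‖ - ν * ‖deriv u t‖ ^ 2 := by linarith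
      _ ≤ ‖v‖ ^ 2 / (2 * ν) := by
          rw [le_div_iff₀ hν2]
          nlinarith [sq_nonneg (‖v‖ - ν * ‖deriv u t‖), sq_nonneg (ν * ‖deriv u t‖)]
  calc κc t * q - (κp t * fd x₀ - fe x₀) * p - ν * ‖deriv u t‖ ^ 2
        + (fd x₀ - fe x₀) * p
      = a * p + κc t * q - ν * ‖deriv u t‖ ^ 2 := by simp only [a]; ring
    _ ≤ _ := key
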